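/- If SCH holds above an infinite cardinal θ, then for every cardinal λ and every regular cardinal μ, λ^{<μ} ≤ λ⁺ + sup_{θ₀ < θ} θ₀^{<μ}. -/

import Mathlib

open Cardinal

universe u

/-- `SCH` holds at `λ`: `λ^{cf λ} = max(2^{cf λ}, λ⁺)`. -/
def SCHAt (lam : Cardinal.{u}) : Prop :=
  lam ^ lam.ord.cof = max (2 ^ lam.ord.cof) (Order.succ lam)

open Ordinal in
/-- Representation of a cardinal power as functions into `toType`. -/
private lemma pow_rep (c ν : Cardinal.{u}) : c ^ ν = #(ν.out → c.ord.ToType) := by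
  rw [← power_def]
  rw [mk_toType, card_ord, mk_out]

private lemma mk_arrow_eq {α : Type u} (ν : Cardinal.{u}) : #(ν.out → α) = #α ^ ν := by
  rw [← power_def, mk_out]

open Ordinal in
/-- If `ν < cf c` and all smaller cardinals satisfy `d ^ ν ≤ c`, then `c ^ ν ≤ c`. -/
private lemma lemA {c ν : Cardinal.{u}} (hc : ℵ₀ ≤ c) (hν : ν < c.ord.cof)
    (h : ∀ d < c, d ^ ν ≤ c) : c ^ ν ≤ c := by
  haveI : IsWellOrder c.ord.ToType (· < ·) := isWellOrder_lt
  rw [pow_rep]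
  have hb : ∀ f : ν.out → c.ord.ToType,
      lsub.{u,u} (fun y => typein (α := c.ord.ToType) (· < ·) (f y)) <
        type ((· < ·) : c.ord.ToType → c.ord.ToType → Prop) := by
    intro f
    rw [type_toType]
    apply lsub_lt_ord
    · rw [mk_out]; exact hν
    · exact fun y => typein_lt_self (f y)
  let F : (ν.out → c.ord.ToType) → Σ β : c.ord.ToType, (ν.out → Set.Iio β) := fun f =>
    ⟨enum (· < ·) ⟨_, hb f⟩, fun x => ⟨f x, by
      show f x < _
      rw [← typein_lt_typein (α := c.ord.ToType) (· < ·), typein_enum]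
      exact lt_lsub _ x⟩⟩
  have hF : Function.Injective F := by
    have hL : Function.LeftInverse
        (fun p : Σ β : c.ord.ToType, (ν.out → Set.Iio β) => fun x => (p.2 x : c.ord.ToType)) F :=
      fun f => rfl
    exact hL.injective
  calc #(ν.out → c.ord.ToType) ≤ #(Σ β : c.ord.ToType, (ν.out → Set.Iio β)) :=
        mk_le_of_injective hF
    _ = sum (fun β : c.ord.ToType => #(Set.Iio β) ^ ν) := by
        rw [mk_sigma]
        congr 1
        funext β
        exact mk_arrow_eq ν
    _ ≤ sum (fun _ : c.ord.ToType => c) :=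
        sum_le_sum _ _ fun β => h _ (mk_Iio_ord_toType β)
    _ = c * c := by rw [sum_const', mk_toType, card_ord]
    _ = c := mul_eq_self hc

open Ordinal in
/-- If all smaller cardinals satisfy `d ^ ν ≤ c`, then `c ^ ν ≤ c ^ cf c`. -/
private lemma lemB {c ν : Cardinal.{u}} (hc : ℵ₀ ≤ c)
    (h : ∀ d < c, d ^ ν ≤ c) : c ^ ν ≤ c ^ c.ord.cof := by
  haveI : IsWellOrder c.ord.ToType (· < ·) := isWellOrder_lt
  obtain ⟨ι, g, hg, hgcof⟩ := exists_lsub_cof c.ord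
  have hgi : ∀ i, g i + 1 < type ((· < ·) : c.ord.ToType → c.ord.ToType → Prop) := by
    intro i
    rw [type_toType]
    exact (isSuccLimit_ord hc).succ_lt (hg ▸ lt_lsub g i)
  set β : ι → c.ord.ToType := fun i => enum (· < ·) ⟨g i + 1, hgi i⟩ with hβ
  have htβ : ∀ i, typein (α := c.ord.ToType) (· < ·) (β i) = g i + 1 := fun i =>
    typein_enum _ _
  rw [pow_rep]
  let F : (ν.out → c.ord.ToType) → Π i : ι, (ν.out → Option (Set.Iio (β i))) :=
    fun f i x => if h' : f x < β i then some ⟨f x, h'⟩ else none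
  have hF : Function.Injective F := by
    intro f f' he
    funext x
    obtain ⟨i, hi⟩ : ∃ i, typein (α := c.ord.ToType) (· < ·) (f x) ≤ g i :=
      lt_lsub_iff.mp (show _ < lsub g by rw [hg]; exact typein_lt_self (f x))
    have hlt : f x < β i := by
      rw [← typein_lt_typein (α := c.ord.ToType) (· < ·), htβ]
      exact lt_of_le_of_lt hi (Order.lt_succ _)
    have h1 := congrFun (congrFun he i) x
    simp only [F, dif_pos hlt] at h1
    by_cases hi' : f' x < β i
    · rw [dif_pos hi'] at h1
      exact congrArg Subtype.val (Option.some.inj h1)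
    · rw [dif_neg hi'] at h1
      exact absurd h1 (Option.some_ne_none _)
  have hterm : ∀ i : ι, #(ν.out → Option (Set.Iio (β i))) ≤ c := by
    intro i
    have h1 : #(Set.Iio (β i)) < c := mk_Iio_ord_toType (β i)
    have h2 : #(Option (Set.Iio (β i))) < c := by
      rw [mk_option]
      rcases lt_or_ge (#(Set.Iio (β i))) ℵ₀ with h3 | h3
      · exact lt_of_lt_of_le (add_lt_aleph0 h3 one_lt_aleph0) hc
      · rwa [add_one_eq h3]
    calc #(ν.out → Option (Set.Iio (β i)))
        = #(Option (Set.Iio (β i))) ^ ν := mk_arrow_eq ν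
      _ ≤ c := h _ h2
  calc #(ν.out → c.ord.ToType) ≤ #(Π i : ι, (ν.out → Option (Set.Iio (β i)))) :=
        mk_le_of_injective hF
    _ = prod (fun i : ι => #(ν.out → Option (Set.Iio (β i)))) := mk_pi _
    _ ≤ prod (fun _ : ι => c) := prod_le_prod _ _ hterm
    _ = c ^ #ι := prod_const' _ _
    _ = c ^ c.ord.cof := by rw [hgcof]

private lemma key {θ μ : Cardinal.{u}} (hθ : ℵ₀ ≤ θ)
    (hsch : ∀ lam : Cardinal.{u}, θ ≤ lam → SCHAt lam)
    (hbdd : BddAbove (Set.range fun θ₀ : Set.Iio θ => (θ₀ : Cardinal.{u}) ^< μ))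
    (c : Cardinal.{u}) :
    ∀ ν < μ, c ^ ν ≤ max (Order.succ c) (⨆ θ₀ : Set.Iio θ, (θ₀ : Cardinal.{u}) ^< μ) := by
  refine Cardinal.lt_wf.induction
    (C := fun c => ∀ ν < μ, c ^ ν ≤ max (Order.succ c) (⨆ θ₀ : Set.Iio θ, (θ₀ : Cardinal.{u}) ^< μ))
    c ?_
  intro c IH ν hν
  set S := ⨆ θ₀ : Set.Iio θ, (θ₀ : Cardinal.{u}) ^< μ with hS
  by_cases hcθ : c < θ
  · refine le_trans (le_trans (le_powerlt c hν) ?_) (le_max_right _ _)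
    exact le_ciSup hbdd (⟨c, hcθ⟩ : Set.Iio θ)
  · push_neg at hcθ
    have hc : ℵ₀ ≤ c := hθ.trans hcθ
    rcases lt_or_ge ν ℵ₀ with hνfin | hνinf
    · exact le_trans (pow_le hc hνfin) (le_trans (Order.le_succ c) (le_max_left _ _))
    by_cases hd : ∃ d, d < c ∧ c ≤ d ^ ν
    · obtain ⟨d, hdc, hcd⟩ := hd
      have h1 : c ^ ν ≤ d ^ ν := by
        calc c ^ ν ≤ (d ^ ν) ^ ν := power_le_power_right hcd
          _ = d ^ (ν * ν) := by rw [power_mul]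
          _ = d ^ ν := by rw [mul_eq_self hνinf]
      refine h1.trans ((IH d hdc ν hν).trans (max_le_max ?_ le_rfl))
      exact (Order.succ_le_of_lt hdc).trans (Order.le_succ c)
    · push_neg at hd
      have h' : ∀ d < c, d ^ ν ≤ c := fun d hdc => (hd d hdc).le
      by_cases hcof : ν < c.ord.cof
      · exact le_trans (lemA hc hcof h')
          (le_trans (Order.le_succ c) (le_max_left _ _))
      · push_neg at hcof
        have h2 : c ^ ν ≤ c ^ c.ord.cof := lemB hc h'
        rw [hsch c hcθ] at h2
        have h3 : (2 : Cardinal) ^ c.ord.cof ≤ Order.succ c := by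
          have h4 : (2 : Cardinal) ^ c.ord.cof ≤ 2 ^ ν :=
            power_le_power_left two_ne_zero hcof
          have h5 : (2 : Cardinal) < c := by
            refine lt_of_lt_of_le ?_ hc
            exact_mod_cast nat_lt_aleph0 2
          exact (h4.trans (hd 2 h5).le).trans (Order.le_succ c)
        refine le_trans h2 (le_trans ?_ (le_max_left _ _))
        exact max_le h3 le_rfl

/-- If SCH holds above an infinite cardinal `θ`, then for every cardinal `λ` and every
regular `μ`, `λ^{<μ} ≤ max(λ⁺, sup_{θ₀ < θ} θ₀^{<μ})`. -/
theorem stmt2 {θ : Cardinal.{u}} (hθ : ℵ₀ ≤ θ) (hsch : ∀ lam : Cardinal.{u}, θ ≤ lam → SCHAt lam)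
    (lam : Cardinal.{u}) {μ : Cardinal.{u}} (hμ : μ.IsRegular) :
    lam ^< μ ≤ max (Order.succ lam) (⨆ θ₀ : Set.Iio θ, (θ₀ : Cardinal.{u}) ^< μ) := by
  have hbdd : BddAbove (Set.range fun θ₀ : Set.Iio θ => (θ₀ : Cardinal.{u}) ^< μ) := by
    refine ⟨θ ^< μ, ?_⟩
    rintro x ⟨θ₀, rfl⟩
    exact powerlt_le.2 fun y hy =>
      (power_le_power_right θ₀.2.le).trans (le_powerlt θ hy)
  rw [powerlt_le]
  exact fun ν hν => key hθ hsch hbdd lam ν hν
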